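/- Suppose v·c_j ≥ 0 for all 1 ≤ j ≤ l. Let m ∈ ℤ^r, let k, i be integers, and set m(k,i) = max_{1≤j≤l} v·c_j if k − i < 0 and m(k,i) = min_{1≤j≤l} v·c_j if k − i ≥ 0. Let Z ⊆ ℤ^r be any subset containing the half-plane { d ∈ ℤ^r : v·d ≥ v·m + (k−i)·m(k,i) }. Then m + ℕC[k−i] ⊆ Z. -/

import Mathlib

open Set Pointwise

/-- The submonoid `ℕC ⊆ G` generated by the list `C = {c 1, …, c l}`. -/
def NCmod {G : Type*} [AddCommGroup G] {l : ℕ} (c : Fin l → G) : Set G :=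
  (AddSubmonoid.closure (Set.range c) : AddSubmonoid G)

/-- The region `ℕC[k] = ⋃ { sign(k)·(w₁c₁ + ⋯ + w_lc_l) + ℕC : w ∈ ℕ^l, ∑ w = |k| }`. -/
def NCk {G : Type*} [AddCommGroup G] {l : ℕ} (c : Fin l → G) (k : ℤ) : Set G :=
  ⋃ (w : Fin l → ℕ) (_ : ∑ j, w j = k.natAbs),
    (k.sign • ∑ j, (w j : ℤ) • c j) +ᵥ NCmod c

/-- The dot product `v · x` of `v ∈ ℝ^r` with `x ∈ ℤ^r`. -/
def dotR {r : ℕ} (v : Fin r → ℝ) (x : Fin r → ℤ) : ℝ :=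
  ∑ i, v i * (x i : ℝ)

/-- `dotR v` as an additive monoid hom. -/
def dotHom {r : ℕ} (v : Fin r → ℝ) : (Fin r → ℤ) →+ ℝ where
  toFun := dotR v
  map_zero' := by simp [dotR]
  map_add' x y := by
    simp [dotR, mul_add, Finset.sum_add_distrib]

lemma dotR_nonneg_of_mem {r l : ℕ} (c : Fin l → (Fin r → ℤ)) (v : Fin r → ℝ)
    (hv : ∀ j, 0 ≤ dotR v (c j)) {s : Fin r → ℤ} (hs : s ∈ NCmod c) :
    0 ≤ dotR v s := by
  induction hs using AddSubmonoid.closure_induction with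
  | mem x hx => obtain ⟨j, rfl⟩ := hx; exact hv j
  | zero => simp [dotR]
  | add x y _ _ hx hy =>
      have := map_add (dotHom v) x y
      simp only [dotHom, AddMonoidHom.coe_mk, ZeroHom.coe_mk] at this
      rw [show dotR v (x + y) = dotR v x + dotR v y from this]; exact add_nonneg hx hy

theorem vadd_NCk_subset_of_halfplane_subset {r l : ℕ} (hl : 0 < l)
    (c : Fin l → (Fin r → ℤ)) (v : Fin r → ℝ)
    (hv : ∀ j, 0 ≤ dotR v (c j))
    (mn mx : ℝ)
    (hmn : IsLeast (Set.range fun j => dotR v (c j)) mn)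
    (hmx : IsGreatest (Set.range fun j => dotR v (c j)) mx)
    (m : Fin r → ℤ) (k i : ℤ) (Z : Set (Fin r → ℤ))
    (hZ : {d : Fin r → ℤ |
        dotR v m + ((k - i : ℤ) : ℝ) * (if k - i < 0 then mx else mn) ≤ dotR v d} ⊆ Z) :
    m +ᵥ NCk c (k - i) ⊆ Z := by
  set n : ℤ := k - i with hn
  rintro x ⟨y, hy, rfl⟩
  rw [NCk, Set.mem_iUnion] at hy
  obtain ⟨w, hy⟩ := hy
  rw [Set.mem_iUnion] at hy
  obtain ⟨hw, s, hs, rfl⟩ := hy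
  apply hZ
  have hdot : ∀ x y : Fin r → ℤ, dotR v (x + y) = dotR v x + dotR v y :=
    fun x y => map_add (dotHom v) x y
  have hzsmul : ∀ (a : ℤ) (x : Fin r → ℤ), dotR v (a • x) = a * dotR v x := by
    intro a x
    have := map_zsmul (dotHom v) a x
    rw [← zsmul_eq_mul]; exact this
  have hT : dotR v (∑ j, (w j : ℤ) • c j) = ∑ j, (w j : ℝ) * dotR v (c j) := by
    rw [show dotR v (∑ j, (w j : ℤ) • c j) = ∑ j, dotR v ((w j : ℤ) • c j) from
      map_sum (dotHom v) _ _]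
    refine Finset.sum_congr rfl fun j _ => ?_
    rw [hzsmul]; push_cast; ring
  have hsnn : 0 ≤ dotR v s := dotR_nonneg_of_mem c v hv hs
  show dotR v m + (n : ℝ) * (if n < 0 then mx else mn) ≤ dotR v (m + (n.sign • ∑ j, (w j : ℤ) • c j + s))
  rw [hdot, hdot, hzsmul, hT]
  have key : (n : ℝ) * (if n < 0 then mx else mn)
      ≤ (n.sign : ℝ) * ∑ j, (w j : ℝ) * dotR v (c j) := by
    rcases lt_trichotomy n 0 with h | h | h
    · rw [if_pos h, Int.sign_eq_neg_one_of_neg h]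
      have hb : ∑ j, (w j : ℝ) * dotR v (c j) ≤ ∑ j, (w j : ℝ) * mx := by
        refine Finset.sum_le_sum fun j _ => ?_
        exact mul_le_mul_of_nonneg_left (hmx.2 ⟨j, rfl⟩) (by positivity)
      have hsum : ∑ j, (w j : ℝ) * mx = (n.natAbs : ℝ) * mx := by
        rw [← Finset.sum_mul]
        congr 1
        push_cast [← hw]
        simp
      have hna : (n.natAbs : ℝ) = -(n : ℝ) := by
        rw [Nat.cast_natAbs, abs_of_nonpos h.le]; push_cast; ring
      rw [hna] at hsum
      push_cast
      linarith
    · simp [h]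
    · rw [if_neg (not_lt.mpr h.le), Int.sign_eq_one_of_pos h]
      have hb : ∑ j, (w j : ℝ) * mn ≤ ∑ j, (w j : ℝ) * dotR v (c j) := by
        refine Finset.sum_le_sum fun j _ => ?_
        exact mul_le_mul_of_nonneg_left (hmn.2 ⟨j, rfl⟩) (by positivity)
      have hsum : ∑ j, (w j : ℝ) * mn = (n.natAbs : ℝ) * mn := by
        rw [← Finset.sum_mul]
        congr 1
        push_cast [← hw]
        simp
      have hna : (n.natAbs : ℝ) = (n : ℝ) := by
        rw [Nat.cast_natAbs, abs_of_nonneg h.le]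
      rw [hna] at hsum
      push_cast
      linarith
  linarith [key, hsnn]
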